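/- arXiv:1810.02270 — 3 statements merged into one kernel-verified Lean document; each statement's English description precedes it below -/
import Mathlib

section
/- Let t be a binary search tree and let x and y be keys occupying adjacent positions in the in-order traversal of t. Then either x is an ancestor of y in t, or y is an ancestor of x in t. -/
/-- Binary trees over a type `α`. -/
inductive BTree (α : Type*) where
  | nil : BTree α
  | node (l : BTree α) (a : α) (r : BTree α) : BTree α
  deriving DecidableEq

namespace BTree

variable {α : Type*}

/-- In-order traversal. -/
def inorder : BTree α → List α
  | nil => []
  | node l a r => inorder l ++ [a] ++ inorder r

/-- Key membership in a tree. -/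
def Mem : BTree α → α → Prop
  | nil, _ => False
  | node l a r, x => Mem l x ∨ x = a ∨ Mem r x

/-- `IsSubtree s t` means `s` occurs as a subtree of `t`. -/
inductive IsSubtree : BTree α → BTree α → Prop
  | refl (t : BTree α) : IsSubtree t t
  | left {s l r : BTree α} {a : α} : IsSubtree s l → IsSubtree s (node l a r)
  | right {s l r : BTree α} {a : α} : IsSubtree s r → IsSubtree s (node l a r)

/-- `x` and `y` occupy adjacent positions in the list `L` (`x` immediately before `y`). -/
def Adjacent (L : List α) (x y : α) : Prop :=
  ∃ i : ℕ, L[i]? = some x ∧ L[i + 1]? = some y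

variable [LinearOrder α]

/-- The binary-search-tree property: at every node, all keys of the left subtree are
smaller than the root key and all keys of the right subtree are larger. -/
def IsBST : BTree α → Prop
  | nil => True
  | node l a r => (∀ x, Mem l x → x < a) ∧ (∀ x, Mem r x → a < x) ∧ IsBST l ∧ IsBST r

/-- `Ancestor t x y`: the key `x` is an ancestor of the key `y` in `t`, i.e. `y` occurs
in a proper subtree of the subtree of `t` rooted at `x`. -/
def Ancestor (t : BTree α) (x y : α) : Prop :=
  ∃ l r : BTree α, IsSubtree (node l x r) t ∧ (Mem l y ∨ Mem r y)

/-- Depth (number of edges from the root) of a key in a binary search tree,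
computed by the standard search path. -/
def depth : BTree α → α → ℕ
  | nil, _ => 0
  | node l a r, x => if x = a then 0 else if x < a then depth l x + 1 else depth r x + 1

lemma mem_of_mem_inorder {t : BTree α} {x : α} (h : x ∈ inorder t) : Mem t x := by
  induction t with
  | nil => simp [inorder] at h
  | node l a r ihl ihr =>
    simp only [inorder, List.mem_append, List.mem_singleton] at h
    rcases h with (h | h) | h
    · exact Or.inl (ihl h)
    · exact Or.inr (Or.inl h)
    · exact Or.inr (Or.inr (ihr h))

lemma ancestor_left {l r : BTree α} {a x y : α} (h : Ancestor l x y) :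
    Ancestor (node l a r) x y := by
  obtain ⟨l', r', hs, hm⟩ := h
  exact ⟨l', r', .left hs, hm⟩

lemma ancestor_right {l r : BTree α} {a x y : α} (h : Ancestor r x y) :
    Ancestor (node l a r) x y := by
  obtain ⟨l', r', hs, hm⟩ := h
  exact ⟨l', r', .right hs, hm⟩

lemma mem_of_getElem? {L : List α} {i : ℕ} {x : α} (h : L[i]? = some x) : x ∈ L := by
  rw [List.getElem?_eq_some_iff] at h
  obtain ⟨hi, rfl⟩ := h
  exact List.getElem_mem hi

/-- of two keys adjacent in the in-order traversal of a BST, one is an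
ancestor of the other. -/
theorem ancestor_of_adjacent (t : BTree α) (ht : IsBST t) (x y : α)
    (hadj : Adjacent (inorder t) x y) :
    Ancestor t x y ∨ Ancestor t y x := by
  clear ht
  induction t generalizing x y with
  | nil => obtain ⟨i, hx, _⟩ := hadj; simp [inorder] at hx
  | node l a r ihl ihr =>
    obtain ⟨i, hx, hy⟩ := hadj
    simp only [inorder] at hx hy
    set L1 := inorder l with hL1
    set L2 := inorder r with hL2
    simp only [List.getElem?_append, List.length_append, List.length_singleton] at hx hy
    rcases lt_trichotomy (i + 1) L1.length with h | h | h
    · rw [if_pos (by omega), if_pos (by omega)] at hx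
      rw [if_pos (by omega), if_pos (by omega)] at hy
      rcases ihl _ _ ⟨i, hx, hy⟩ with h' | h'
      · exact Or.inl (ancestor_left h')
      · exact Or.inr (ancestor_left h')
    · rw [if_pos (by omega), if_pos (by omega)] at hx
      rw [if_pos (by omega), if_neg (by omega)] at hy
      have h0 : i + 1 - L1.length = 0 := by omega
      rw [h0] at hy
      simp only [List.getElem?_cons_zero, Option.some.injEq] at hy
      subst hy
      exact Or.inr ⟨l, r, .refl _, Or.inl (mem_of_mem_inorder (mem_of_getElem? hx))⟩
    · rcases eq_or_lt_of_le (show L1.length ≤ i by omega) with h2 | h2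
      · rw [if_pos (by omega), if_neg (by omega)] at hx
        have h0 : i - L1.length = 0 := by omega
        rw [h0] at hx
        simp only [List.getElem?_cons_zero, Option.some.injEq] at hx
        subst hx
        rw [if_neg (by omega)] at hy
        exact Or.inl ⟨l, r, .refl _, Or.inr (mem_of_mem_inorder (mem_of_getElem? hy))⟩
      · rw [if_neg (by omega)] at hx
        rw [if_neg (by omega)] at hy
        have h0 : i + 1 - (L1.length + 1) = i - (L1.length + 1) + 1 := by omega
        rw [h0] at hy
        rcases ihr _ _ ⟨i - (L1.length + 1), hx, hy⟩ with h' | h'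
        · exact Or.inl (ancestor_right h')
        · exact Or.inr (ancestor_right h')

end BTree
end

section
/- Let t be a binary search tree and let x and y be keys occupying adjacent positions in the in-order traversal of t. Then the depth of x in t is not equal to the depth of y in t. -/
namespace BTree

variable {α : Type*}

variable [LinearOrder α]

theorem mem_inorder {t : BTree α} {x : α} : x ∈ inorder t ↔ Mem t x := by
  induction t with
  | nil => simp [inorder, Mem]
  | node l a r ihl ihr => simp [inorder, Mem, ihl, ihr]

/-- keys adjacent in the in-order traversal of a BST have distinct depths. -/
theorem depth_ne_of_adjacent (t : BTree α) (ht : IsBST t) (x y : α)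
    (hadj : Adjacent (inorder t) x y) :
    depth t x ≠ depth t y := by
  induction t with
  | nil => obtain ⟨i, h1, _⟩ := hadj; simp [inorder] at h1
  | node l a r ihl ihr =>
    obtain ⟨hal, har, hbl, hbr⟩ := ht
    obtain ⟨i, h1, h2⟩ := hadj
    rw [inorder, List.append_assoc, List.singleton_append] at h1 h2
    set n := (inorder l).length with hn
    rcases lt_trichotomy (i + 1) n with h | h | h
    · -- both in left subtree
      rw [List.getElem?_append_left (by omega)] at h1
      rw [List.getElem?_append_left (by omega)] at h2
      have hxm : Mem l x := mem_inorder.1 (List.mem_of_getElem? h1)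
      have hym : Mem l y := mem_inorder.1 (List.mem_of_getElem? h2)
      have hih := ihl hbl ⟨i, h1, h2⟩
      simp [depth, (hal x hxm).ne, hal x hxm, (hal y hym).ne, hal y hym]
      omega
    · -- x last in left, y = a
      rw [List.getElem?_append_left (by omega)] at h1
      rw [List.getElem?_append_right (by omega)] at h2
      have : i + 1 - n = 0 := by omega
      rw [this] at h2
      simp at h2
      have hxm : Mem l x := mem_inorder.1 (List.mem_of_getElem? h1)
      subst h2
      simp [depth, (hal x hxm).ne, hal x hxm]
    · rcases eq_or_lt_of_le (Nat.le_of_lt_succ h) with h' | h'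
      · -- x = a, y first in right
        rw [List.getElem?_append_right (by omega)] at h1
        rw [List.getElem?_append_right (by omega)] at h2
        have e1 : i - n = 0 := by omega
        have e2 : i + 1 - n = 1 := by omega
        rw [e1] at h1; rw [e2] at h2
        simp at h1 h2
        have hym : Mem r y := mem_inorder.1 (List.mem_of_getElem? h2)
        subst h1
        have hay := har y hym
        simp [depth, hay.ne', not_lt.mpr hay.le]
      · -- both in right subtree
        rw [List.getElem?_append_right (by omega)] at h1
        rw [List.getElem?_append_right (by omega)] at h2
        have e1 : i - n = (i - n - 1) + 1 := by omega
        have e2 : i + 1 - n = (i - n - 1) + 1 + 1 := by omega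
        rw [e1] at h1; rw [e2] at h2
        simp only [List.getElem?_cons_succ] at h1 h2
        have hxm : Mem r x := mem_inorder.1 (List.mem_of_getElem? h1)
        have hym : Mem r y := mem_inorder.1 (List.mem_of_getElem? h2)
        have hih := ihr hbr ⟨i - n - 1, h1, h2⟩
        have hax := har x hxm
        have hay := har y hym
        simp [depth, hax.ne', not_lt.mpr hax.le, hay.ne', not_lt.mpr hay.le]
        omega

end BTree
end

section
/- Define `eraseMin : Tree α → Tree α` by `eraseMin nil = nil`, `eraseMin (node nil a r) = r`, and `eraseMin (node l a r) = node (eraseMin l) a r` for l ≠ nil. Let t = node l a r be a binary search tree with r ≠ nil and let m be the minimum key of r. Then the tree `node l m (eraseMin r)` is again a binary search tree, and its in-order traversal equals the in-order traversal of t with the single entry a deleted. -/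
namespace BTree

variable {α : Type*}

variable [LinearOrder α]

/-- Remove the leftmost node of a tree. -/
def eraseMin : BTree α → BTree α
  | nil => nil
  | node nil _ r => r
  | node (node ll b lr) a r => node (eraseMin (node ll b lr)) a r

theorem mem_iff_inorder (t : BTree α) (x : α) : Mem t x ↔ x ∈ inorder t := by
  induction t with
  | nil => simp [Mem, inorder]
  | node l a r ihl ihr =>
    simp [Mem, inorder, ihl, ihr, or_comm, or_assoc, or_left_comm, eq_comm]

theorem inorder_eraseMin (t : BTree α) (h : t ≠ nil) :
    ∃ m0, inorder t = m0 :: inorder (eraseMin t) := by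
  induction t with
  | nil => exact absurd rfl h
  | node l a r ihl =>
    cases l with
    | nil => exact ⟨a, by simp [inorder, eraseMin]⟩
    | node ll b lr =>
      obtain ⟨m0, hm0⟩ := ihl (by simp)
      refine ⟨m0, ?_⟩
      show inorder (node ll b lr) ++ [a] ++ inorder r = _
      rw [hm0]
      simp [inorder, eraseMin]

theorem mem_of_mem_eraseMin {t : BTree α} {x : α} (h : Mem (eraseMin t) x) : Mem t x := by
  rcases eq_or_ne t nil with rfl | hne
  · simp [eraseMin, Mem] at h
  · obtain ⟨m0, hm0⟩ := inorder_eraseMin t hne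
    rw [mem_iff_inorder] at h ⊢
    rw [hm0]; exact List.mem_cons_of_mem _ h

theorem isBST_eraseMin {t : BTree α} (h : IsBST t) : IsBST (eraseMin t) := by
  induction t with
  | nil => exact h
  | node l a r ihl =>
    cases l with
    | nil => exact h.2.2.2
    | node ll b lr =>
      obtain ⟨h1, h2, h3, h4⟩ := h
      exact ⟨fun x hx => h1 x (mem_of_mem_eraseMin hx), h2, ihl h3, h4⟩

theorem sorted_inorder {t : BTree α} (h : IsBST t) : (inorder t).Pairwise (· < ·) := by
  induction t with
  | nil => exact List.Pairwise.nil
  | node l a r ihl ihr =>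
    obtain ⟨h1, h2, h3, h4⟩ := h
    show List.Pairwise (· < ·) (inorder l ++ [a] ++ inorder r)
    rw [List.pairwise_append, List.pairwise_append]
    refine ⟨⟨ihl h3, List.pairwise_singleton _ a, ?_⟩, ihr h4, ?_⟩
    · intro x hx y hy
      rw [List.mem_singleton] at hy; subst hy
      exact h1 x ((mem_iff_inorder l x).2 hx)
    · intro x hx y hy
      have hy' := h2 y ((mem_iff_inorder r y).2 hy)
      rcases List.mem_append.1 hx with hx | hx
      · exact (h1 x ((mem_iff_inorder l x).2 hx)).trans hy'
      · rw [List.mem_singleton] at hx; subst hx; exact hy'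

/-- Hibbard deletion: replacing the root key `a` of a BST `node l a r`
(with `r ≠ nil`) by the minimum `m` of `r` and erasing `m` from `r` yields a BST whose
in-order traversal is the original one with the single entry `a` deleted. -/
theorem hibbard_deletion (l r : BTree α) (a : α) (ht : IsBST (node l a r))
    (hr : r ≠ nil) (m : α) (hm : Mem r m) (hmin : ∀ z, Mem r z → m ≤ z) :
    IsBST (node l m (eraseMin r)) ∧
    inorder (node l m (eraseMin r)) = (inorder (node l a r)).erase a := by
  obtain ⟨h1, h2, h3, h4⟩ := ht
  obtain ⟨m0, hm0⟩ := inorder_eraseMin r hr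
  have hm0mem : Mem r m0 := (mem_iff_inorder r m0).2 (by rw [hm0]; simp)
  have hsorted := sorted_inorder h4
  have hm0min : ∀ z ∈ inorder (eraseMin r), m0 < z := by
    rw [hm0, List.pairwise_cons] at hsorted
    exact hsorted.1
  have hmm0 : m = m0 := by
    have h5 : m ∈ inorder r := (mem_iff_inorder r m).1 hm
    rw [hm0] at h5
    rcases List.mem_cons.1 h5 with h6 | h5
    · exact h6
    · exact absurd (hmin m0 hm0mem) (not_le.2 (hm0min m h5))
  subst hmm0
  have ham : a < m := h2 m hm0mem
  have hanotl : a ∉ inorder l := fun h =>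
    absurd (h1 a ((mem_iff_inorder l a).2 h)) (lt_irrefl a)
  constructor
  · refine ⟨fun x hx => (h1 x hx).trans ham, fun x hx => ?_, h3, isBST_eraseMin h4⟩
    exact hm0min x ((mem_iff_inorder _ x).1 hx)
  · simp only [inorder]
    rw [List.append_assoc (inorder l) [a] (inorder r), List.erase_append_right _ hanotl]
    simp [hm0]

end BTree
end
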